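/- Let G be a loopless multigraph with vertex set V, |V| = n, and edges e_1, …, e_m (unordered pairs of distinct vertices, parallel edges allowed), and let Δ be the maximum degree of G, where the degree of v is the number of indices i with v ∈ e_i. Construct a bipartite graph G' = (A, B, F) as follows: A = V; for each vertex v, B contains a set S_v of exactly Δ vertices, consisting of one vertex v_{(i)} for each edge index i with v ∈ e_i together with Δ − deg(v) additional filler vertices, and B is the disjoint union of the sets S_v; F contains the edge {v, w} for every v ∈ A and every w ∈ S_v, and additionally, for every edge e_i = {u_i, v_i} of G, the edges {u_i, (v_i)_{(i)}} and {v_i, (u_i)_{(i)}}. Then for every bijection π : V → {1,…,n}, the minimum cardinality of a set F' ⊆ (A × B) ∖ F such that in the bipartite graph (A, B, F ∪ F') the neighborhoods of A are nested along π (i.e., for all u, v ∈ A with π(u) ≤ π(v), every B-neighbor of u is also a B-neighbor of v) equals (∑_{i=1}^m |π(u_i) − π(v_i)|) + Δ·n·(n−1)/2 − 2m. -/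

import Mathlib

open Finset

/-- The vertex `v` is an endpoint of the edge with index `i`. -/
def Inc {V : Type*} {m : ℕ} (E : Fin m → V × V) (v : V) (i : Fin m) : Prop :=
  (E i).1 = v ∨ (E i).2 = v

/-- The degree of `v` in the multigraph with edge family `E`: the number of edge indices
`i` with `v ∈ e_i`. -/
def mdeg {V : Type*} [DecidableEq V] {m : ℕ} (E : Fin m → V × V) (v : V) : ℕ :=
  (Finset.univ.filter fun i => (E i).1 = v ∨ (E i).2 = v).card

/-- The maximum degree of the multigraph with edge family `E`. -/
def maxDeg {V : Type*} [Fintype V] [DecidableEq V] {m : ℕ} (E : Fin m → V × V) : ℕ :=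
  Finset.univ.sup (mdeg E)

/-- The right side `B` of the bipartite graph of Yannakakis' reduction: it is the disjoint
union over the vertices `v` of the sets `S_v`, where `S_v` consists of one vertex
`v_{(i)}` for each edge index `i` with `v ∈ e_i`, together with `Δ − deg(v)` filler
vertices (`Δ` being the maximum degree), so that `|S_v| = Δ`. -/
def Bvert {V : Type*} [Fintype V] [DecidableEq V] {m : ℕ} (E : Fin m → V × V) : Type _ :=
  Σ v : V, ({i : Fin m // Inc E v i} ⊕ Fin (maxDeg E - mdeg E v))

/-- The edges of the bipartite graph of Yannakakis' reduction: `a ∈ A = V` is joined to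
`w ∈ B` iff `w ∈ S_a`, or `w = u_{(i)}` for some edge `e_i = {a, u}` (i.e. `w` is the copy
of the other endpoint `u` of an edge `e_i` incident to `a`). -/
def Frel {V : Type*} [Fintype V] [DecidableEq V] {m : ℕ} (E : Fin m → V × V)
    (a : V) (w : Bvert E) : Prop :=
  w.1 = a ∨ ∃ (i : Fin m) (h : Inc E w.1 i),
    w.2 = Sum.inl ⟨i, h⟩ ∧
      (((E i).1 = a ∧ (E i).2 = w.1) ∨ ((E i).1 = w.1 ∧ (E i).2 = a))

section Aux
variable {V : Type*} [Fintype V] [DecidableEq V] {m : ℕ} (E : Fin m → V × V)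

instance instDecInc : ∀ v (i : Fin m), Decidable (Inc E v i) := fun v i => by
  unfold Inc; infer_instance

instance : DecidableEq (Bvert E) := by unfold Bvert; infer_instance

instance : Fintype (Bvert E) := by unfold Bvert; infer_instance

instance instDecFrel : ∀ a (w : Bvert E), Decidable (Frel E a w) := fun a w => by
  unfold Frel; infer_instance

lemma mdeg_le (x : V) : mdeg E x ≤ maxDeg E := Finset.le_sup (mem_univ x)

lemma frel_inl {u x : V} {i : Fin m} (h : Inc E x i) :
    Frel E u ⟨x, Sum.inl ⟨i, h⟩⟩ ↔ u = (E i).1 ∨ u = (E i).2 := by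
  constructor
  · rintro (h1 | ⟨j, hj, heq, hcase⟩)
    · rcases h with h' | h'
      · exact Or.inl (h1 ▸ h'.symm)
      · exact Or.inr (h1 ▸ h'.symm)
    · have hij : i = j := congrArg Subtype.val (Sum.inl.inj heq)
      subst hij
      rcases hcase with ⟨h1, _⟩ | ⟨_, h2⟩
      · exact Or.inl h1.symm
      · exact Or.inr h2.symm
  · rintro (rfl | rfl)
    · by_cases hx : x = (E i).1
      · exact Or.inl hx
      · refine Or.inr ⟨i, h, rfl, Or.inl ⟨rfl, ?_⟩⟩
        rcases h with h' | h'
        · exact absurd h'.symm hx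
        · exact h'
    · by_cases hx : x = (E i).2
      · exact Or.inl hx
      · refine Or.inr ⟨i, h, rfl, Or.inr ⟨?_, rfl⟩⟩
        rcases h with h' | h'
        · exact h'
        · exact absurd h'.symm hx

lemma frel_inr {u x : V} (f : Fin (maxDeg E - mdeg E x)) :
    Frel E u ⟨x, Sum.inr f⟩ ↔ u = x := by
  constructor
  · rintro (h1 | ⟨j, hj, heq, _⟩)
    · exact h1.symm
    · exact absurd heq (by simp)
  · rintro rfl; exact Or.inl rfl

variable {n : ℕ} (π : V ≃ Fin n)

def mu : Bvert E → ℕ := fun w =>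
  match w with
  | ⟨_, .inl s⟩ => min (π (E s.1).1 : ℕ) (π (E s.1).2 : ℕ)
  | ⟨x, .inr _⟩ => (π x : ℕ)

lemma mu_le_of_frel {u : V} {w : Bvert E} (hf : Frel E u w) : mu E π w ≤ (π u : ℕ) := by
  obtain ⟨x, s | f⟩ := w
  · obtain ⟨i, h⟩ := s
    rw [frel_inl E h] at hf
    rcases hf with rfl | rfl
    · exact min_le_left _ _
    · exact min_le_right _ _
  · rw [frel_inr E f] at hf
    subst hf
    exact le_refl _

lemma exists_frel_mu (w : Bvert E) : ∃ u, Frel E u w ∧ (π u : ℕ) = mu E π w := by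
  obtain ⟨x, s | f⟩ := w
  · obtain ⟨i, h⟩ := s
    rcases le_total (π (E i).1 : ℕ) (π (E i).2 : ℕ) with hle | hle
    · exact ⟨(E i).1, (frel_inl E h).2 (Or.inl rfl), (min_eq_left hle).symm⟩
    · exact ⟨(E i).2, (frel_inl E h).2 (Or.inr rfl), (min_eq_right hle).symm⟩
  · exact ⟨x, (frel_inr E f).2 rfl, rfl⟩

lemma mu_lt (w : Bvert E) : mu E π w < n := by
  obtain ⟨x, s | f⟩ := w
  · exact lt_of_le_of_lt (min_le_left _ _) (π (E s.1).1).isLt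
  · exact (π x).isLt

lemma sum_filter_pair {M : Type*} [AddCommMonoid M] (f : V → M) {a b : V} (hab : a ≠ b) :
    ∑ x ∈ univ.filter (fun x => a = x ∨ b = x), f x = f a + f b := by
  have h : univ.filter (fun x => a = x ∨ b = x) = {a, b} := by
    ext x; simp [eq_comm]
  rw [h, Finset.sum_pair hab]

lemma sum_inc_swap {M : Type*} [AddCommMonoid M] (hloop : ∀ i, (E i).1 ≠ (E i).2)
    (g : Fin m → V → M) :
    ∑ x : V, ∑ i ∈ univ.filter (fun i => (E i).1 = x ∨ (E i).2 = x), g i x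
      = ∑ i, (g i (E i).1 + g i (E i).2) := by
  simp_rw [Finset.sum_filter]
  rw [Finset.sum_comm]
  refine Finset.sum_congr rfl fun i _ => ?_
  rw [← Finset.sum_filter]
  exact sum_filter_pair (fun x => g i x) (hloop i)

lemma sum_bvert {M : Type*} [AddCommMonoid M] (f : Bvert E → M) :
    ∑ w : Bvert E, f w
      = ∑ x : V, ((∑ s : {i // Inc E x i}, f ⟨x, Sum.inl s⟩)
          + ∑ t : Fin (maxDeg E - mdeg E x), f ⟨x, Sum.inr t⟩) := by
  refine Eq.trans (Finset.sum_sigma univ (fun _ => univ) (fun w => f w)) ?_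
  exact Finset.sum_congr rfl fun x _ => Fintype.sum_sum_type _

lemma sum_subtype_inc {M : Type*} [AddCommMonoid M] (x : V) (g : Fin m → M) :
    ∑ s : {i // Inc E x i}, g s.1
      = ∑ i ∈ univ.filter (fun i => (E i).1 = x ∨ (E i).2 = x), g i :=
  (Finset.sum_subtype _ (by intro i; simp [Inc]) g).symm

lemma card_filter_ge (k : ℕ) (hk : k < n) :
    (univ.filter fun v : V => k ≤ (π v : ℕ)).card = n - k := by
  have h1 : (univ.filter fun v : V => k ≤ (π v : ℕ)).card
      = (univ.filter fun t : Fin n => k ≤ (t : ℕ)).card := by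
    refine Finset.card_bij (fun v _ => π v) ?_ ?_ ?_
    · intro v hv; simp only [mem_filter, mem_univ, true_and] at hv ⊢; exact hv
    · intro a _ b _ h; exact π.injective h
    · intro t ht; simp only [mem_filter, mem_univ, true_and] at ht
      exact ⟨π.symm t, by simp [ht], by simp⟩
  rw [h1]
  have h2 : (univ.filter fun t : Fin n => k ≤ (t : ℕ)) = Finset.Ici (⟨k, hk⟩ : Fin n) := by
    ext t; simp [Fin.le_def]
  rw [h2, Fin.card_Ici]

end Aux

/-- For every linear arrangement `π` of the loopless multigraph `G` (with `n` vertices,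
edges `e_1, …, e_m`, maximum degree `Δ`), the minimum number of pairs that must be added
to the bipartite graph `(A, B, F)` of Yannakakis' reduction so that the `B`-neighborhoods
of the vertices of `A` become nested along `π` equals
`∑ᵢ |π(uᵢ) − π(vᵢ)| + Δ·n·(n−1)/2 − 2m`. -/



theorem ola_to_chain_cost {V : Type*} [Fintype V] [DecidableEq V] {m : ℕ}
    (E : Fin m → V × V) (hloop : ∀ i, (E i).1 ≠ (E i).2)
    (n : ℕ) (hn : n = Fintype.card V) (π : V ≃ Fin n) :
    ∃ c : ℕ,
      IsLeast {k : ℕ |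
        ∃ F' : Finset (V × Bvert E),
          (∀ q ∈ F', ¬ Frel E q.1 q.2) ∧
          (∀ u v : V, (π u : ℕ) ≤ (π v : ℕ) →
            ∀ w : Bvert E, (Frel E u w ∨ (u, w) ∈ F') → (Frel E v w ∨ (v, w) ∈ F')) ∧
          F'.card = k} c ∧
      (c : ℤ) + 2 * (m : ℤ) =
        (∑ i : Fin m, |((π (E i).1 : ℕ) : ℤ) - ((π (E i).2 : ℕ) : ℤ)|) +
          ((maxDeg E * (n * (n - 1) / 2) : ℕ) : ℤ) := by
  classical
  set Δ := maxDeg E with hΔ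
  set Ns : V → Finset (Bvert E) := fun v => univ.filter (fun w => Frel E v w) with hNs
  set Ms : V → Finset (Bvert E) := fun v => univ.filter (fun w => mu E π w ≤ (π v : ℕ)) with hMs
  have hmemN : ∀ v w, w ∈ Ns v ↔ Frel E v w := fun v w => by simp [hNs]
  have hmemM : ∀ v w, w ∈ Ms v ↔ mu E π w ≤ (π v : ℕ) := fun v w => by simp [hMs]
  have hNM : ∀ v, Ns v ⊆ Ms v := fun v w hw =>
    (hmemM v w).2 (mu_le_of_frel E π ((hmemN v w).1 hw))
  refine ⟨∑ v, ((Ms v) \ (Ns v)).card, ⟨?_, ?_⟩, ?_⟩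
  · -- membership
    set F0 : Finset (V × Bvert E) :=
      univ.biUnion (fun v => (Ms v \ Ns v).image (fun w => (v, w))) with hF0
    have hmemF : ∀ p : V × Bvert E, p ∈ F0 ↔ p.2 ∈ Ms p.1 \ Ns p.1 := by
      intro p
      simp only [hF0, Finset.mem_biUnion, Finset.mem_image, Finset.mem_univ, true_and]
      constructor
      · rintro ⟨v, w, hw, rfl⟩; exact hw
      · intro h; exact ⟨p.1, p.2, h, rfl⟩
    refine ⟨F0, ?_, ?_, ?_⟩
    · intro q hq
      have h := Finset.mem_sdiff.1 ((hmemF q).1 hq)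
      exact fun hfrel => h.2 ((hmemN _ _).2 hfrel)
    · intro u v huv w hw
      have hwM : w ∈ Ms v := by
        have h1 : mu E π w ≤ (π u : ℕ) := by
          rcases hw with hf | hf
          · exact mu_le_of_frel E π hf
          · exact (hmemM u w).1 (Finset.mem_sdiff.1 ((hmemF (u, w)).1 hf)).1
        exact (hmemM v w).2 (le_trans h1 huv)
      by_cases hfv : Frel E v w
      · exact Or.inl hfv
      · exact Or.inr ((hmemF (v, w)).2
          (Finset.mem_sdiff.2 ⟨hwM, fun hc => hfv ((hmemN v w).1 hc)⟩))
    · rw [hF0, Finset.card_biUnion]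
      · exact Finset.sum_congr rfl fun v _ =>
          Finset.card_image_of_injective _ (fun a b h => (Prod.ext_iff.1 h).2)
      · intro a _ b _ hab
        rw [Function.onFun, Finset.disjoint_left]
        intro p hp hq
        simp only [Finset.mem_image] at hp hq
        obtain ⟨w1, _, rfl⟩ := hp
        obtain ⟨w2, _, h2⟩ := hq
        exact hab (congrArg Prod.fst h2).symm
  · -- lower bound
    rintro k ⟨F', hF1, hF2, rfl⟩
    have key : ∀ v : V, ((Ms v) \ (Ns v)).card ≤ (F'.filter fun q => q.1 = v).card := by
      intro v
      refine Finset.card_le_card_of_injOn (fun w => (v, w)) ?_ ?_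
      · intro w hw
        obtain ⟨hwM, hwN⟩ := Finset.mem_sdiff.1 hw
        obtain ⟨u, hu, hmu⟩ := exists_frel_mu E π w
        have hle : (π u : ℕ) ≤ (π v : ℕ) := by rw [hmu]; exact (hmemM v w).1 hwM
        rcases hF2 u v hle w (Or.inl hu) with hfv | hfv
        · exact absurd ((hmemN v w).2 hfv) hwN
        · exact Finset.mem_filter.2 ⟨hfv, rfl⟩
      · intro w1 _ w2 _ h; exact (Prod.ext_iff.1 h).2
    calc ∑ v, ((Ms v) \ (Ns v)).card
        ≤ ∑ v, (F'.filter fun q => q.1 = v).card := Finset.sum_le_sum (fun v _ => key v)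
      _ = F'.card := (Finset.card_eq_sum_card_fiberwise (fun q _ => Finset.mem_univ q.1)).symm
  · -- the arithmetic identity
    have hcardV : Fintype.card V = n := hn.symm
    have hsub : ∀ x : V, Fintype.card {i // Inc E x i} = mdeg E x := by
      intro x
      rw [Fintype.card_subtype]
      rfl
    have hs2m : ∑ x : V, mdeg E x = 2 * m := by
      have h := sum_inc_swap E hloop (fun _ _ => (1 : ℕ))
      simp only [Finset.sum_const, smul_eq_mul, mul_one, Finset.card_univ,
        Fintype.card_fin] at h
      rw [show (∑ x : V, mdeg E x)
          = ∑ x : V, (univ.filter fun i => (E i).1 = x ∨ (E i).2 = x).card from rfl, h]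
      omega
    have hsum_pi : ∑ x : V, (π x : ℕ) = n * (n - 1) / 2 := by
      rw [Equiv.sum_comp π (fun t : Fin n => (t : ℕ)),
        Fin.sum_univ_eq_sum_range (fun i => i) n, Finset.sum_range_id]
    have h2sum_pi : 2 * (∑ x : V, ((π x : ℕ) : ℤ)) = (n : ℤ) * n - n := by
      have hnat : (∑ x : V, (π x : ℕ)) * 2 = n * (n - 1) := by
        rw [Equiv.sum_comp π (fun t : Fin n => (t : ℕ)),
          Fin.sum_univ_eq_sum_range (fun i => i) n]
        exact Finset.sum_range_id_mul_two n
      have hle : n ≤ n * n := by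
        cases n with
        | zero => exact le_refl 0
        | succ k => exact Nat.le_mul_of_pos_left _ (Nat.succ_pos k)
      have hnn : n * (n - 1) = n * n - n := Nat.mul_pred n n
      have := congrArg (fun t : ℕ => (t : ℤ)) (hnat.trans hnn)
      push_cast [Nat.cast_sub hle] at this
      linarith [this]
    have hcardB : Fintype.card (Bvert E) = n * Δ := by
      have h := sum_bvert E (fun _ => (1 : ℕ))
      simp only [Finset.sum_const, smul_eq_mul, mul_one, Finset.card_univ] at h
      rw [h]
      have h' : ∀ x : V, Fintype.card {i // Inc E x i}
          + Fintype.card (Fin (maxDeg E - mdeg E x)) = Δ := by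
        intro x
        rw [hsub x, Fintype.card_fin]
        have := mdeg_le E x
        omega
      rw [Finset.sum_congr rfl fun x _ => h' x, Finset.sum_const, Finset.card_univ,
        hcardV, smul_eq_mul]
    have hSN : ∑ v, (Ns v).card = Δ * n + 2 * m := by
      have swap : ∑ v, (Ns v).card = ∑ w : Bvert E, (univ.filter fun v => Frel E v w).card := by
        simp only [hNs, Finset.card_filter]
        exact Finset.sum_comm
      rw [swap, sum_bvert E (fun w => (univ.filter fun v => Frel E v w).card)]
      have hx : ∀ x : V,
          ((∑ s : {i // Inc E x i}, (univ.filter fun v => Frel E v ⟨x, Sum.inl s⟩).card)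
            + ∑ t : Fin (Δ - mdeg E x), (univ.filter fun v => Frel E v ⟨x, Sum.inr t⟩).card)
          = Δ + mdeg E x := by
        intro x
        have h1 : ∀ s : {i // Inc E x i},
            (univ.filter fun v => Frel E v ⟨x, Sum.inl s⟩).card = 2 := by
          rintro ⟨i, h⟩
          have he : (univ.filter fun v => Frel E v ⟨x, Sum.inl ⟨i, h⟩⟩) = {(E i).1, (E i).2} := by
            ext u; simp [frel_inl E h]
          rw [he, Finset.card_pair (hloop i)]
        have h2 : ∀ t : Fin (Δ - mdeg E x),
            (univ.filter fun v => Frel E v ⟨x, Sum.inr t⟩).card = 1 := by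
          intro t
          have he : (univ.filter fun v => Frel E v ⟨x, Sum.inr t⟩) = {x} := by
            ext u; simp [frel_inr E t]
          rw [he, Finset.card_singleton]
        rw [Finset.sum_congr rfl (fun s _ => h1 s), Finset.sum_congr rfl (fun t _ => h2 t)]
        simp only [Finset.sum_const, smul_eq_mul, mul_one, Finset.card_univ, hsub x,
          Fintype.card_fin]
        have := mdeg_le E x
        omega
      refine Eq.trans (Finset.sum_congr rfl (fun x _ => ?_)) (?_ : ∑ x : V, (Δ + mdeg E x) = _)
      · convert hx x
      rw [Finset.sum_add_distrib, Finset.sum_const,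
        Finset.card_univ, hcardV, smul_eq_mul, hs2m]
      ring
    have hSM : ∑ v, (Ms v).card = ∑ w : Bvert E, (n - mu E π w) := by
      have swap : ∑ v, (Ms v).card
          = ∑ w : Bvert E, (univ.filter fun v => mu E π w ≤ (π v : ℕ)).card := by
        simp only [hMs, Finset.card_filter]
        exact Finset.sum_comm
      rw [swap]
      exact Finset.sum_congr rfl fun w _ => card_filter_ge π (mu E π w) (mu_lt E π w)
    -- the mu sum, in ℤ
    have hA : ∑ x : V, ∑ i ∈ univ.filter (fun i => (E i).1 = x ∨ (E i).2 = x),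
          ((min (π (E i).1 : ℕ) (π (E i).2 : ℕ) : ℕ) : ℤ)
        = ∑ i : Fin m, 2 * ((min (π (E i).1 : ℕ) (π (E i).2 : ℕ) : ℕ) : ℤ) := by
      rw [sum_inc_swap E hloop]
      exact Finset.sum_congr rfl fun i _ => (two_mul _).symm
    have hB : ∑ x : V, (mdeg E x : ℤ) * ((π x : ℕ) : ℤ)
        = ∑ i : Fin m, (((π (E i).1 : ℕ) : ℤ) + ((π (E i).2 : ℕ) : ℤ)) := by
      rw [← sum_inc_swap E hloop (fun _ x => ((π x : ℕ) : ℤ))]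
      refine Finset.sum_congr rfl fun x _ => ?_
      rw [Finset.sum_const, nsmul_eq_mul]
      rfl
    have habs : ∀ i : Fin m,
        2 * ((min (π (E i).1 : ℕ) (π (E i).2 : ℕ) : ℕ) : ℤ)
          - (((π (E i).1 : ℕ) : ℤ) + ((π (E i).2 : ℕ) : ℤ))
        = -|((π (E i).1 : ℕ) : ℤ) - ((π (E i).2 : ℕ) : ℤ)| := by
      intro i
      push_cast
      rcases le_total ((π (E i).1 : ℕ) : ℤ) ((π (E i).2 : ℕ) : ℤ) with h | h
      · rw [min_eq_left h, abs_of_nonpos (sub_nonpos.2 h)]; ring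
      · rw [min_eq_right h, abs_of_nonneg (sub_nonneg.2 h)]; ring
    have hSmu : ∑ w : Bvert E, (mu E π w : ℤ)
        = (Δ : ℤ) * (∑ x : V, ((π x : ℕ) : ℤ))
          - ∑ i : Fin m, |((π (E i).1 : ℕ) : ℤ) - ((π (E i).2 : ℕ) : ℤ)| := by
      rw [sum_bvert E (fun w => (mu E π w : ℤ))]
      have step : ∀ x : V,
          ((∑ s : {i // Inc E x i}, (mu E π ⟨x, Sum.inl s⟩ : ℤ))
            + ∑ t : Fin (Δ - mdeg E x), (mu E π ⟨x, Sum.inr t⟩ : ℤ))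
          = (∑ i ∈ univ.filter (fun i => (E i).1 = x ∨ (E i).2 = x),
              ((min (π (E i).1 : ℕ) (π (E i).2 : ℕ) : ℕ) : ℤ))
            + ((Δ : ℤ) - (mdeg E x : ℤ)) * ((π x : ℕ) : ℤ) := by
        intro x
        congr 1
        · exact sum_subtype_inc E x (fun i => ((min (π (E i).1 : ℕ) (π (E i).2 : ℕ) : ℕ) : ℤ))
        · have hmu2 : ∀ t : Fin (Δ - mdeg E x), mu E π ⟨x, Sum.inr t⟩ = (π x : ℕ) :=
            fun _ => rfl
          simp only [hmu2, Finset.sum_const, Finset.card_univ, Fintype.card_fin,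
            nsmul_eq_mul]
          rw [Nat.cast_sub (mdeg_le E x)]
      rw [Finset.sum_congr rfl (fun x _ => step x), Finset.sum_add_distrib, hA]
      have expand : ∑ x : V, ((Δ : ℤ) - (mdeg E x : ℤ)) * ((π x : ℕ) : ℤ)
          = (Δ : ℤ) * (∑ x : V, ((π x : ℕ) : ℤ))
            - ∑ i : Fin m, (((π (E i).1 : ℕ) : ℤ) + ((π (E i).2 : ℕ) : ℤ)) := by
        rw [← hB, Finset.mul_sum, ← Finset.sum_sub_distrib]
        exact Finset.sum_congr rfl fun x _ => by ring
      rw [expand]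
      have h1 : ∑ i : Fin m, (2 * ((min (π (E i).1 : ℕ) (π (E i).2 : ℕ) : ℕ) : ℤ)
            - (((π (E i).1 : ℕ) : ℤ) + ((π (E i).2 : ℕ) : ℤ)))
          = -∑ i : Fin m, |((π (E i).1 : ℕ) : ℤ) - ((π (E i).2 : ℕ) : ℤ)| := by
        rw [← Finset.sum_neg_distrib]
        exact Finset.sum_congr rfl fun i _ => habs i
      rw [Finset.sum_sub_distrib] at h1
      linarith [h1]
    -- cast the M and N sums and assemble
    have hc : ((∑ v, ((Ms v) \ (Ns v)).card : ℕ) : ℤ)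
        = (((∑ v, (Ms v).card : ℕ) : ℤ)) - ((∑ v, (Ns v).card : ℕ) : ℤ) := by
      push_cast
      rw [← Finset.sum_sub_distrib]
      refine Finset.sum_congr rfl fun v _ => ?_
      rw [Finset.card_sdiff_of_subset (hNM v), Nat.cast_sub (Finset.card_le_card (hNM v))]
    have hMcast : ((∑ v, (Ms v).card : ℕ) : ℤ)
        = ((n : ℤ) * Δ) * n - ∑ w : Bvert E, (mu E π w : ℤ) := by
      rw [hSM, Nat.cast_sum]
      have : ∀ w : Bvert E, ((n - mu E π w : ℕ) : ℤ) = (n : ℤ) - (mu E π w : ℤ) :=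
        fun w => Nat.cast_sub (le_of_lt (mu_lt E π w))
      rw [Finset.sum_congr rfl (fun w _ => this w), Finset.sum_sub_distrib,
        Finset.sum_const, Finset.card_univ, hcardB, nsmul_eq_mul]
      push_cast
      ring
    rw [hc, hMcast, hSmu, hSN]
    have hgoalT : ((Δ * (n * (n - 1) / 2) : ℕ) : ℤ) = (Δ : ℤ) * (∑ x : V, ((π x : ℕ) : ℤ)) := by
      rw [← hsum_pi]
      push_cast
      ring
    rw [hgoalT]
    push_cast
    linear_combination (-(Δ : ℤ)) * h2sum_pi
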